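/- Let X ∈ ℝ^{n×p} and y ∈ ℝ^n with |y_i| ≤ b_y and |X_{ij}| ≤ b_x for all i, j. For a subset S ⊆ [p] with |S| = s and r > 0, define R(S, D) = min over β ∈ ℝ^s with ‖β‖₂² ≤ r² of ‖y − X_S β‖₂². Then for any two datasets D, D' that differ only in one row (x_n, y_n) vs (x_n', y_n'), with all entries satisfying the same bounds, we have R(S, D) − R(S, D') ≤ 2b_y² + 2b_x² r² s. -/

import Mathlib

/-- Global sensitivity bound for the constrained least-squares objective:
if `|y_i| ≤ b_y`, `|X_{ij}| ≤ b_x` and the two datasets differ in one row, then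
`R(S,D) − R(S,D') ≤ 2 b_y² + 2 b_x² r² s`. -/
theorem stmt7 (n p s : ℕ) (b_x b_y r : ℝ) (hr : 0 < r)
    (X X' : Fin n → Fin p → ℝ) (y y' : Fin n → ℝ)
    (hby : ∀ i, |y i| ≤ b_y) (hby' : ∀ i, |y' i| ≤ b_y)
    (hbx : ∀ i j, |X i j| ≤ b_x) (hbx' : ∀ i j, |X' i j| ≤ b_x)
    (hnb : ∃ i₀, ∀ i, i ≠ i₀ → X i = X' i ∧ y i = y' i)
    (S : Finset (Fin p)) (hS : S.card = s) :
    sInf {v : ℝ | ∃ β : Fin p → ℝ, (∑ j ∈ S, (β j) ^ 2 ≤ r ^ 2) ∧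
        v = ∑ i, (y i - ∑ j ∈ S, X i j * β j) ^ 2}
    - sInf {v : ℝ | ∃ β : Fin p → ℝ, (∑ j ∈ S, (β j) ^ 2 ≤ r ^ 2) ∧
        v = ∑ i, (y' i - ∑ j ∈ S, X' i j * β j) ^ 2}
    ≤ 2 * b_y ^ 2 + 2 * b_x ^ 2 * r ^ 2 * s := by
  obtain ⟨i₀, hi₀⟩ := hnb
  set C : ℝ := 2 * b_y ^ 2 + 2 * b_x ^ 2 * r ^ 2 * s with hCdef
  set A := {v : ℝ | ∃ β : Fin p → ℝ, (∑ j ∈ S, (β j) ^ 2 ≤ r ^ 2) ∧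
      v = ∑ i, (y i - ∑ j ∈ S, X i j * β j) ^ 2} with hA
  set B := {v : ℝ | ∃ β : Fin p → ℝ, (∑ j ∈ S, (β j) ^ 2 ≤ r ^ 2) ∧
      v = ∑ i, (y' i - ∑ j ∈ S, X' i j * β j) ^ 2} with hB
  have hfeas0 : (∑ j ∈ S, ((0 : Fin p → ℝ) j) ^ 2) ≤ r ^ 2 := by
    simp [le_of_lt (pow_pos hr 2)]
  have hBne : B.Nonempty := ⟨_, 0, hfeas0, rfl⟩
  have hAbd : BddBelow A := by
    refine ⟨0, fun v hv => ?_⟩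
    obtain ⟨β, hβ, rfl⟩ := hv
    exact Finset.sum_nonneg fun i _ => sq_nonneg _
  have hkey : ∀ β : Fin p → ℝ, (∑ j ∈ S, (β j) ^ 2 ≤ r ^ 2) →
      (∑ i, (y i - ∑ j ∈ S, X i j * β j) ^ 2)
        ≤ (∑ i, (y' i - ∑ j ∈ S, X' i j * β j) ^ 2) + C := by
    intro β hβ
    have hsplit1 : (∑ i, (y i - ∑ j ∈ S, X i j * β j) ^ 2)
        = (y i₀ - ∑ j ∈ S, X i₀ j * β j) ^ 2
          + ∑ i ∈ Finset.univ.erase i₀, (y i - ∑ j ∈ S, X i j * β j) ^ 2 :=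
      (Finset.add_sum_erase _ _ (Finset.mem_univ i₀)).symm
    have hsplit2 : (∑ i, (y' i - ∑ j ∈ S, X' i j * β j) ^ 2)
        = (y' i₀ - ∑ j ∈ S, X' i₀ j * β j) ^ 2
          + ∑ i ∈ Finset.univ.erase i₀, (y' i - ∑ j ∈ S, X' i j * β j) ^ 2 :=
      (Finset.add_sum_erase _ _ (Finset.mem_univ i₀)).symm
    have heq : ∑ i ∈ Finset.univ.erase i₀, (y i - ∑ j ∈ S, X i j * β j) ^ 2
        = ∑ i ∈ Finset.univ.erase i₀, (y' i - ∑ j ∈ S, X' i j * β j) ^ 2 := by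
      refine Finset.sum_congr rfl fun i hi => ?_
      obtain ⟨hX, hy⟩ := hi₀ i (Finset.ne_of_mem_erase hi)
      rw [hX, hy]
    -- bound the i₀ term of D
    set t : ℝ := ∑ j ∈ S, X i₀ j * β j with ht
    have hby2 : (y i₀) ^ 2 ≤ b_y ^ 2 := by
      have h := hby i₀
      have := abs_nonneg (y i₀)
      nlinarith [sq_abs (y i₀)]
    have hcs : t ^ 2 ≤ (∑ j ∈ S, (X i₀ j) ^ 2) * (∑ j ∈ S, (β j) ^ 2) := by
      simpa using Finset.sum_mul_sq_le_sq_mul_sq S (fun j => X i₀ j) β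
    have hXb : (∑ j ∈ S, (X i₀ j) ^ 2) ≤ (s : ℝ) * b_x ^ 2 := by
      calc (∑ j ∈ S, (X i₀ j) ^ 2) ≤ ∑ j ∈ S, b_x ^ 2 := by
            refine Finset.sum_le_sum fun j _ => ?_
            have h := hbx i₀ j
            have := abs_nonneg (X i₀ j)
            nlinarith [sq_abs (X i₀ j)]
        _ = (s : ℝ) * b_x ^ 2 := by rw [Finset.sum_const, hS]; simp [mul_comm]
    have hXnn : (0:ℝ) ≤ ∑ j ∈ S, (X i₀ j) ^ 2 :=
      Finset.sum_nonneg fun j _ => sq_nonneg _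
    have hβnn : (0:ℝ) ≤ ∑ j ∈ S, (β j) ^ 2 :=
      Finset.sum_nonneg fun j _ => sq_nonneg _
    have hbx2 : (0:ℝ) ≤ (s:ℝ) * b_x ^ 2 := by positivity
    have ht2 : t ^ 2 ≤ (s : ℝ) * b_x ^ 2 * r ^ 2 := by
      calc t ^ 2 ≤ (∑ j ∈ S, (X i₀ j) ^ 2) * (∑ j ∈ S, (β j) ^ 2) := hcs
        _ ≤ ((s : ℝ) * b_x ^ 2) * r ^ 2 := mul_le_mul hXb hβ hβnn hbx2
    have hterm : (y i₀ - t) ^ 2 ≤ C := by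
      have h1 : (y i₀ - t) ^ 2 ≤ 2 * (y i₀) ^ 2 + 2 * t ^ 2 := by
        nlinarith [sq_nonneg (y i₀ + t)]
      rw [hCdef]; nlinarith
    have hnn' : (0:ℝ) ≤ (y' i₀ - ∑ j ∈ S, X' i₀ j * β j) ^ 2 := sq_nonneg _
    rw [hsplit1, hsplit2, heq]
    linarith
  have hstep : ∀ v ∈ B, sInf A ≤ v + C := by
    intro v hv
    obtain ⟨β, hβ, rfl⟩ := hv
    have hmem : (∑ i, (y i - ∑ j ∈ S, X i j * β j) ^ 2) ∈ A := ⟨β, hβ, rfl⟩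
    exact le_trans (csInf_le hAbd hmem) (hkey β hβ)
  have : sInf A - C ≤ sInf B :=
    le_csInf hBne fun v hv => by linarith [hstep v hv]
  linarith
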